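/- For every T > 0 there exists a constant C > 0 (depending only on T) such that for all a ≤ −1, f_T(a) ≥ C/|a|, where f_T(a) = a·T − log(√(a²+1)) + log(cosh(log(√(a²+1)+a) − T·√(a²+1))). -/

import Mathlib

/-- `f T a = a·T − log(√(a²+1)) + log(cosh(log(√(a²+1)+a) − T·√(a²+1)))`. -/
noncomputable def optCost (T a : ℝ) : ℝ :=
  a * T - Real.log (Real.sqrt (a ^ 2 + 1)) +
    Real.log (Real.cosh (Real.log (Real.sqrt (a ^ 2 + 1) + a) - T * Real.sqrt (a ^ 2 + 1)))

private lemma aux_log {u : ℝ} (hu : 0 < u) : u / (1 + u) ≤ Real.log (1 + u) := by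
  have h0 : (0:ℝ) < 1 + u := by linarith
  have h := Real.log_le_sub_one_of_pos (show (0:ℝ) < (1+u)⁻¹ by positivity)
  rw [Real.log_inv] at h
  have h2 : (1+u)⁻¹ - 1 = -(u/(1+u)) := by field_simp; ring
  rw [h2] at h
  linarith

private lemma aux_final {b c L : ℝ} (hb : 1 ≤ b) (hc : 0 < c)
    (hL : Real.log (1 + c / b) ≤ L) : c / (1 + c) / b ≤ L := by
  have hb0 : 0 < b := by linarith
  have hu : 0 < c / b := div_pos hc hb0
  have h1 := aux_log hu
  have heq : c / b / (1 + c / b) = c / (b + c) := by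
    rw [div_div]
    congr 1
    field_simp
  have h2 : c / (1 + c) / b ≤ c / (b + c) := by
    rw [div_div]
    gcongr
    nlinarith [mul_le_mul_of_nonneg_left hb hc.le]
  rw [heq] at h1
  linarith

/-- For every `T > 0` there is `C > 0` with `f_T(a) ≥ C/|a|` for all `a ≤ −1`. -/
theorem optCost_lower_bound_neg (T : ℝ) (hT : 0 < T) :
    ∃ C > 0, ∀ a : ℝ, a ≤ -1 → C / |a| ≤ optCost T a := by
  set c : ℝ := min (T/6) (T^4/32) with hc_def
  have hc : 0 < c := lt_min (by positivity) (by positivity)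
  have hcT6 : c ≤ T/6 := min_le_left _ _
  have hcT4 : c ≤ T^4/32 := min_le_right _ _
  clear_value c
  refine ⟨c / (1 + c), by positivity, ?_⟩
  intro a ha
  have hb1 : 1 ≤ -a := by linarith
  have hb0 : 0 < -a := by linarith
  have habs : |a| = -a := abs_of_neg (by linarith)
  set s : ℝ := Real.sqrt (a ^ 2 + 1) with hs_def
  have hs2 : s ^ 2 = a ^ 2 + 1 := Real.sq_sqrt (by positivity)
  have hs0 : 0 < s := Real.sqrt_pos.mpr (by positivity)
  have hopt0 : optCost T a
      = a*T - Real.log s + Real.log (Real.cosh (Real.log (s+a) - T*s)) := by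
    unfold optCost
    rw [hs_def]
  clear_value s
  have hsa : -a < s := by nlinarith
  obtain ⟨p, hp_def⟩ : ∃ p : ℝ, p = s - a := ⟨_, rfl⟩
  have hp0 : 0 < p := by rw [hp_def]; linarith
  have hp2 : 2 < p := by rw [hp_def]; linarith
  obtain ⟨q, hq_def⟩ : ∃ q : ℝ, q = p⁻¹ := ⟨_, rfl⟩
  have hq0 : 0 < q := by rw [hq_def]; exact inv_pos.mpr hp0
  have hq1 : p * q = 1 := by rw [hq_def]; exact mul_inv_cancel₀ hp0.ne'
  have hprod : (s + a) * p = 1 := by rw [hp_def]; linear_combination hs2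
  have hsum : s + a = q := by
    rw [hq_def, inv_eq_one_div, eq_div_iff hp0.ne']; exact hprod
  have h2s : 2 * s = p + q := by rw [hp_def, ← hsum]; ring
  -- purely algebraic facts
  have ha2 : 1 ≤ a^2 := by nlinarith
  have h3b : 2*s ≤ 3*(-a) := by nlinarith
  have hsp : s ≤ p := by rw [hp_def]; linarith
  have hd0 : 0 ≤ c / -a := le_of_lt (div_pos hc hb0)
  obtain ⟨E1, hE1_def⟩ : ∃ E : ℝ, E = Real.exp (T * (s + a)) := ⟨_, rfl⟩
  obtain ⟨E2, hE2_def⟩ : ∃ E : ℝ, E = Real.exp (-(T * p)) := ⟨_, rfl⟩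
  obtain ⟨G, hG_def⟩ : ∃ G : ℝ, G = (p * E1 + E2 * q) / (2 * s) := ⟨_, rfl⟩
  -- rewrite optCost as log G
  have hcoshpos : (0:ℝ) < (p * Real.exp (T*s) + p⁻¹ * (Real.exp (T*s))⁻¹) / 2 := by
    have h1 : 0 < p * Real.exp (T*s) := mul_pos hp0 (Real.exp_pos _)
    have h2 : 0 < p⁻¹ * (Real.exp (T*s))⁻¹ :=
      mul_pos (inv_pos.mpr hp0) (inv_pos.mpr (Real.exp_pos _))
    linarith
  have hcosh : Real.cosh (Real.log (s + a) - T * s)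
      = (p * Real.exp (T*s) + p⁻¹ * (Real.exp (T*s))⁻¹) / 2 := by
    have hx : Real.log (s + a) - T * s = -(Real.log p + T * s) := by
      rw [hsum, hq_def, Real.log_inv]; ring
    rw [hx, Real.cosh_neg, Real.cosh_eq, Real.exp_add, Real.exp_log hp0,
      show -(Real.log p + T*s) = -Real.log p + -(T*s) from by ring,
      Real.exp_add, Real.exp_neg, Real.exp_neg, Real.exp_log hp0]
  have hE1eq : E1 = Real.exp (a*T) * Real.exp (T*s) := by
    rw [hE1_def, ← Real.exp_add]; congr 1; ring
  have hE2eq : E2 = Real.exp (a*T) * (Real.exp (T*s))⁻¹ := by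
    rw [hE2_def, show -(T*p) = a*T + -(T*s) from by rw [hp_def]; ring,
      Real.exp_add, Real.exp_neg]
  have hexp : Real.exp (optCost T a) = G := by
    rw [hopt0, hcosh, Real.exp_add, Real.exp_sub, Real.exp_log hs0, Real.exp_log hcoshpos,
      hG_def, hE1eq, hE2eq, hq_def]
    field_simp
  have hGpos : 0 < G := hexp ▸ Real.exp_pos _
  have hopt : optCost T a = Real.log G := by rw [← hexp, Real.log_exp]
  -- exponential lower bounds
  have hE1q : E1 = Real.exp (T * q) := by rw [hE1_def, hsum]
  have hE1_lb1 : 1 + T * q ≤ E1 := by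
    rw [hE1q]; linarith [Real.add_one_le_exp (T*q)]
  have hE1_lb2 : (1 + T*q/2)^2 ≤ E1 := by
    have he : Real.exp (T*q) = Real.exp (T*q/2) * Real.exp (T*q/2) := by
      rw [← Real.exp_add]; congr 1; ring
    rw [hE1q, he, pow_two]
    have h := Real.add_one_le_exp (T*q/2)
    have h0 : (0:ℝ) ≤ 1 + T*q/2 := by positivity
    exact mul_self_le_mul_self h0 (by linarith)
  have hE2_lb : 1 - T * p ≤ E2 := by
    rw [hE2_def]; linarith [Real.add_one_le_exp (-(T*p))]
  have hE2_pos : 0 < E2 := by rw [hE2_def]; exact Real.exp_pos _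
  -- main inequality : 1 + c/(-a) ≤ G
  have hG1 : 1 + c / -a ≤ G := by
    rw [hG_def, le_div_iff₀ (by positivity : (0:ℝ) < 2*s)]
    have expand : (1 + c / -a) * (2*s) = 2*s + 2*s*(c / -a) := by ring
    rw [expand]
    rcases le_total q (T/2) with hcase | hcase
    · -- large p : q ≤ T/2
      have m1 : p * (1 + T*q) ≤ p * E1 := mul_le_mul_of_nonneg_left hE1_lb1 hp0.le
      have e1 : p * (1 + T*q) = p + T*(p*q) := by ring
      rw [hq1] at e1
      have hE2q : 0 ≤ E2 * q := le_of_lt (mul_pos hE2_pos hq0)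
      have m2 : 2*s*(c / -a) ≤ 3*(-a)*(c / -a) := mul_le_mul_of_nonneg_right h3b hd0
      have e2 : 3*(-a)*(c / -a) = 3*c := by
        rw [show 3*(-a)*(c / -a) = 3*((c / -a)*(-a)) from by ring,
          div_mul_cancel₀ _ hb0.ne']
      rw [e2] at m2
      linarith [m1, e1, hE2q, h2s, hcase, hcT6, m2]
    · -- small p : T/2 ≤ q
      have m0 : p * (T/2) ≤ p * q := mul_le_mul_of_nonneg_left hcase hp0.le
      have hpT : p * T ≤ 2 := by linarith [hq1, m0]
      have m1 : p * (1 + T*q/2)^2 ≤ p * E1 := mul_le_mul_of_nonneg_left hE1_lb2 hp0.le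
      have e1 : p * (1 + T*q/2)^2 = p + T*(p*q) + T^2*((p*q)*q)/4 := by ring
      rw [hq1] at e1
      have m2 : (1 - T*p) * q ≤ E2 * q := mul_le_mul_of_nonneg_right hE2_lb hq0.le
      have e2 : (1 - T*p) * q = q - T*(p*q) := by ring
      rw [hq1] at e2
      have hdT : c / -a ≤ T^4/32 := le_trans (div_le_self hc.le hb1) hcT4
      have h1 : 2*s*(c / -a) ≤ 2*p*(T^4/32) :=
        mul_le_mul (by linarith) hdT hd0 (by linarith)
      have m3 : p*T*T^3 ≤ 2*T^3 :=
        mul_le_mul_of_nonneg_right hpT (by positivity)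
      have m4 : 2*T^2*(T/2) ≤ 2*T^2*q :=
        mul_le_mul_of_nonneg_left hcase (by positivity)
      linarith [m1, e1, m2, e2, h1, m3, m4, h2s]
  -- assemble
  rw [habs, hopt]
  have hlog2 : Real.log (1 + c / -a) ≤ Real.log G :=
    Real.log_le_log (by positivity) hG1
  exact aux_final hb1 hc hlog2
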